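/- arXiv:1611.03174 — 2 statements merged into one kernel-verified Lean document; each statement's English description precedes it below -/
import Mathlib

section
/- Let 𝐇 = H ⊕ Ĥ ⊕ H with J, Ĵ, X as above. A subspace η ⊂ 𝐇 belongs to Sym(𝐇) (i.e. (Jh,k) = 0 for all h,k ∈ η) if and only if Xη is the graph of an isometric linear operator V from a subspace of H ⊕ Ĥ into H (writing 𝐇 = (H ⊕ Ĥ) ⊕ H and identifying Xη ⊂ (H⊕Ĥ) ⊕ H with a set of pairs). Moreover this correspondence η ↦ V is bijective between Sym(𝐇) and all isometries V ∈ [dom V, H] with dom V a subspace of H ⊕ Ĥ. -/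
/- STATEMENT 5: η ∈ Sym(𝐇) iff Xη is the graph of an isometric operator V from a subspace
of H ⊕ Ĥ into H (a subspace G ⊂ (H⊕Ĥ)⊕H is such a graph iff ‖bottom part‖ = ‖top part‖
on G); moreover η ↦ Xη is a bijection between Sym(𝐇) and such graphs. -/

noncomputable section

abbrev bH (p q : ℕ) := EuclideanSpace ℂ (Fin p ⊕ Fin q ⊕ Fin p)

def JL (p q : ℕ) : bH p q →ₗ[ℂ] bH p q where
  toFun y :=
    WithLp.toLp 2 (Sum.elim (fun i => -y (Sum.inr (Sum.inr i)))
      (Sum.elim (fun j => Complex.I * y (Sum.inr (Sum.inl j)))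
        (fun i => y (Sum.inl i))) : (Fin p ⊕ Fin q ⊕ Fin p) → ℂ)
  map_add' x y := by
    ext i
    rcases i with i | j | i <;>
      simp only [Sum.elim_inl, Sum.elim_inr, PiLp.add_apply] <;> ring
  map_smul' c x := by
    ext i
    rcases i with i | j | i <;>
      simp only [Sum.elim_inl, Sum.elim_inr, PiLp.smul_apply, smul_eq_mul,
        RingHom.id_apply] <;> ring
/-- X = (1/√2)[[−iI_H, 0, I_H],[0, √2 I_Ĥ, 0],[iI_H, 0, I_H]]. -/
def XL (p q : ℕ) : bH p q →ₗ[ℂ] bH p q where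
  toFun y :=
    WithLp.toLp 2 (Sum.elim
      (fun i => (Real.sqrt 2 : ℂ)⁻¹ * (-Complex.I * y (Sum.inl i) + y (Sum.inr (Sum.inr i))))
      (Sum.elim (fun j => y (Sum.inr (Sum.inl j)))
        (fun i => (Real.sqrt 2 : ℂ)⁻¹ *
          (Complex.I * y (Sum.inl i) + y (Sum.inr (Sum.inr i))))) : (Fin p ⊕ Fin q ⊕ Fin p) → ℂ)
  map_add' x y := by
    ext i
    rcases i with i | j | i <;>
      simp only [Sum.elim_inl, Sum.elim_inr, PiLp.add_apply] <;> ring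
  map_smul' c x := by
    ext i
    rcases i with i | j | i <;>
      simp only [Sum.elim_inl, Sum.elim_inr, PiLp.smul_apply, smul_eq_mul,
        RingHom.id_apply] <;> ring

/-- The H ⊕ Ĥ part of an element of 𝐇 = (H ⊕ Ĥ) ⊕ H. -/
def topPart (p q : ℕ) (x : bH p q) : EuclideanSpace ℂ (Fin p ⊕ Fin q) :=
  WithLp.toLp 2 (Sum.elim (fun i => x (Sum.inl i)) (fun j => x (Sum.inr (Sum.inl j))) : (Fin p ⊕ Fin q) → ℂ)

/-- The last H part of an element of 𝐇 = (H ⊕ Ĥ) ⊕ H. -/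
def botPart (p q : ℕ) (x : bH p q) : EuclideanSpace ℂ (Fin p) :=
  WithLp.toLp 2 (fun i => x (Sum.inr (Sum.inr i)) : Fin p → ℂ)

-- inverse of X
def YL (p q : ℕ) : bH p q →ₗ[ℂ] bH p q where
  toFun y :=
    WithLp.toLp 2 (Sum.elim
      (fun i => (Real.sqrt 2 : ℂ)⁻¹ * (Complex.I * y (Sum.inl i) - Complex.I * y (Sum.inr (Sum.inr i))))
      (Sum.elim (fun j => y (Sum.inr (Sum.inl j)))
        (fun i => (Real.sqrt 2 : ℂ)⁻¹ *
          (y (Sum.inl i) + y (Sum.inr (Sum.inr i))))) : (Fin p ⊕ Fin q ⊕ Fin p) → ℂ)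
  map_add' x y := by
    ext i
    rcases i with i | j | i <;>
      simp only [Sum.elim_inl, Sum.elim_inr, PiLp.add_apply] <;> ring
  map_smul' c x := by
    ext i
    rcases i with i | j | i <;>
      simp only [Sum.elim_inl, Sum.elim_inr, PiLp.smul_apply, smul_eq_mul,
        RingHom.id_apply] <;> ring

lemma s_sq : ((Real.sqrt 2 : ℂ))⁻¹ * ((Real.sqrt 2 : ℂ))⁻¹ = 2⁻¹ := by
  have h : ((Real.sqrt 2 : ℝ) : ℂ) * ((Real.sqrt 2 : ℝ) : ℂ) = 2 := by
    norm_cast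
    exact Real.mul_self_sqrt (by norm_num)
  rw [← mul_inv, h]

lemma XY (p q : ℕ) : (XL p q).comp (YL p q) = LinearMap.id := by
  ext y i
  rcases i with i | j | i <;>
    simp only [XL, YL, LinearMap.comp_apply, LinearMap.coe_mk, AddHom.coe_mk,
      Sum.elim_inl, Sum.elim_inr, LinearMap.id_apply, PiLp.toLp_apply]
  · linear_combination (2 * y (Sum.inl i)) * s_sq +
      ((-y (Sum.inl i) + y (Sum.inr (Sum.inr i))) * ((Real.sqrt 2 : ℂ))⁻¹ *
        ((Real.sqrt 2 : ℂ))⁻¹) * Complex.I_sq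
  · linear_combination (2 * y (Sum.inr (Sum.inr i))) * s_sq +
      ((y (Sum.inl i) - y (Sum.inr (Sum.inr i))) * ((Real.sqrt 2 : ℂ))⁻¹ * ((Real.sqrt 2 : ℂ))⁻¹) * Complex.I_sq

lemma YX (p q : ℕ) : (YL p q).comp (XL p q) = LinearMap.id := by
  ext y i
  rcases i with i | j | i <;>
    simp only [XL, YL, LinearMap.comp_apply, LinearMap.coe_mk, AddHom.coe_mk,
      Sum.elim_inl, Sum.elim_inr, LinearMap.id_apply, PiLp.toLp_apply]
  · linear_combination (2 * y (Sum.inl i)) * s_sq +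
      ((-2 * y (Sum.inl i)) * ((Real.sqrt 2 : ℂ))⁻¹ * ((Real.sqrt 2 : ℂ))⁻¹) * Complex.I_sq
  · linear_combination (2 * y (Sum.inr (Sum.inr i))) * s_sq

lemma key (p q : ℕ) (h : bH p q) :
    (inner ℂ ((JL p q) h) h : ℂ) =
      Complex.I * (((‖botPart p q ((XL p q) h)‖ : ℂ))^2 - ((‖topPart p q ((XL p q) h)‖ : ℂ))^2) := by
  have hb : (inner ℂ (botPart p q ((XL p q) h)) (botPart p q ((XL p q) h)) : ℂ)
      = ((‖botPart p q ((XL p q) h)‖ : ℂ))^2 := inner_self_eq_norm_sq_to_K _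
  have ht : (inner ℂ (topPart p q ((XL p q) h)) (topPart p q ((XL p q) h)) : ℂ)
      = ((‖topPart p q ((XL p q) h)‖ : ℂ))^2 := inner_self_eq_norm_sq_to_K _
  rw [← hb, ← ht]
  simp only [JL, XL, topPart, botPart, LinearMap.coe_mk, AddHom.coe_mk,
    PiLp.inner_apply, RCLike.inner_apply', PiLp.toLp_apply, Fintype.sum_sum_type, Sum.elim_inl, Sum.elim_inr]
  have E1 : (∑ x : Fin p, (starRingEnd ℂ) (-h (Sum.inr (Sum.inr x))) * h (Sum.inl x)) +
      (∑ x : Fin p, (starRingEnd ℂ) (h (Sum.inl x)) * h (Sum.inr (Sum.inr x))) =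
      Complex.I *
        ((∑ x : Fin p,
            (starRingEnd ℂ) (((Real.sqrt 2 : ℂ))⁻¹ * (Complex.I * h (Sum.inl x) + h (Sum.inr (Sum.inr x)))) *
              (((Real.sqrt 2 : ℂ))⁻¹ * (Complex.I * h (Sum.inl x) + h (Sum.inr (Sum.inr x))))) -
         ∑ x : Fin p,
            (starRingEnd ℂ) (((Real.sqrt 2 : ℂ))⁻¹ * (-Complex.I * h (Sum.inl x) + h (Sum.inr (Sum.inr x)))) *
              (((Real.sqrt 2 : ℂ))⁻¹ * (-Complex.I * h (Sum.inl x) + h (Sum.inr (Sum.inr x))))) := by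
    rw [mul_sub, Finset.mul_sum, Finset.mul_sum, ← Finset.sum_sub_distrib,
      ← Finset.sum_add_distrib]
    refine Finset.sum_congr rfl fun x _ => ?_
    simp only [map_mul, map_add, map_neg, Complex.conj_I, map_inv₀, Complex.conj_ofReal]
    linear_combination
      (2 * (starRingEnd ℂ) (h (Sum.inr (Sum.inr x))) * h (Sum.inl x)
        - 2 * (starRingEnd ℂ) (h (Sum.inl x)) * h (Sum.inr (Sum.inr x))) * s_sq +
      (-(((Real.sqrt 2 : ℂ))⁻¹ * ((Real.sqrt 2 : ℂ))⁻¹) *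
        (2 * (starRingEnd ℂ) (h (Sum.inr (Sum.inr x))) * h (Sum.inl x)
          - 2 * (starRingEnd ℂ) (h (Sum.inl x)) * h (Sum.inr (Sum.inr x)))) * Complex.I_sq
  have E2 : (∑ x : Fin q, (starRingEnd ℂ) (Complex.I * h (Sum.inr (Sum.inl x))) * h (Sum.inr (Sum.inl x))) =
      -Complex.I * ∑ x : Fin q, (starRingEnd ℂ) (h (Sum.inr (Sum.inl x))) * h (Sum.inr (Sum.inl x)) := by
    rw [Finset.mul_sum]
    refine Finset.sum_congr rfl fun x _ => ?_
    simp only [map_mul, Complex.conj_I]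
    ring
  linear_combination E1 + E2

lemma polar (p q : ℕ) (η : Submodule ℂ (bH p q))
    (hd : ∀ h ∈ η, (inner ℂ ((JL p q) h) h : ℂ) = 0) :
    ∀ h ∈ η, ∀ k ∈ η, (inner ℂ ((JL p q) h) k : ℂ) = 0 := by
  intro h hh k hk
  have h1 := hd (h + k) (η.add_mem hh hk)
  have h2 := hd (h + Complex.I • k) (η.add_mem hh (η.smul_mem _ hk))
  simp only [map_add, map_smul, inner_add_left, inner_add_right, inner_smul_left,
    inner_smul_right, hd h hh, hd k hk, Complex.conj_I, zero_add, add_zero,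
    mul_zero, neg_zero] at h1 h2
  linear_combination h1 / 2 - (Complex.I / 2) * h2 +
    (((inner ℂ ((JL p q) h) k : ℂ) - (inner ℂ ((JL p q) k) h : ℂ)) / 2) * Complex.I_sq

lemma diag_iff (p q : ℕ) (h : bH p q) :
    (inner ℂ ((JL p q) h) h : ℂ) = 0 ↔
      ‖botPart p q ((XL p q) h)‖ = ‖topPart p q ((XL p q) h)‖ := by
  rw [key, mul_eq_zero, sub_eq_zero]
  constructor
  · rintro (hI | he)
    · exact absurd hI Complex.I_ne_zero
    · have h2 : ‖botPart p q ((XL p q) h)‖ ^ 2 = ‖topPart p q ((XL p q) h)‖ ^ 2 := by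
        exact_mod_cast he
      rw [← Real.sqrt_sq (norm_nonneg (botPart p q ((XL p q) h))),
        ← Real.sqrt_sq (norm_nonneg (topPart p q ((XL p q) h))), h2]
  · intro he
    right
    rw [he]

theorem stmt5 (p q : ℕ) :
    -- η ∈ Sym(𝐇) iff Xη is the graph of an isometric operator from a subspace of H⊕Ĥ to H
    (∀ η : Submodule ℂ (bH p q),
      (∀ h ∈ η, ∀ k ∈ η, (inner ℂ ((JL p q) h) k : ℂ) = 0) ↔
        (∀ x ∈ η.map (XL p q), ‖botPart p q x‖ = ‖topPart p q x‖)) ∧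
    -- the correspondence η ↦ Xη is injective on Sym(𝐇) ...
    (∀ η₁ η₂ : Submodule ℂ (bH p q),
      (∀ h ∈ η₁, ∀ k ∈ η₁, (inner ℂ ((JL p q) h) k : ℂ) = 0) →
      (∀ h ∈ η₂, ∀ k ∈ η₂, (inner ℂ ((JL p q) h) k : ℂ) = 0) →
      η₁.map (XL p q) = η₂.map (XL p q) → η₁ = η₂) ∧
    -- ... and onto the set of graphs of isometries
    (∀ G : Submodule ℂ (bH p q),
      (∀ x ∈ G, ‖botPart p q x‖ = ‖topPart p q x‖) →
      ∃ η : Submodule ℂ (bH p q),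
        (∀ h ∈ η, ∀ k ∈ η, (inner ℂ ((JL p q) h) k : ℂ) = 0) ∧ η.map (XL p q) = G) := by
  have hinj : Function.Injective (XL p q) := by
    intro x y hxy
    have h2 := congrArg (fun z => (YL p q) z) hxy
    simpa only [← LinearMap.comp_apply, YX p q, LinearMap.id_apply] using h2
  have main : ∀ η : Submodule ℂ (bH p q),
      (∀ h ∈ η, ∀ k ∈ η, (inner ℂ ((JL p q) h) k : ℂ) = 0) ↔
        (∀ x ∈ η.map (XL p q), ‖botPart p q x‖ = ‖topPart p q x‖) := by
    intro η
    constructor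
    · rintro hs x ⟨h, hh, rfl⟩
      exact (diag_iff p q h).mp (hs h hh h hh)
    · intro hg
      exact polar p q η (fun h hh => (diag_iff p q h).mpr (hg _ ⟨h, hh, rfl⟩))
  refine ⟨main, fun η₁ η₂ _ _ hm => Submodule.map_injective_of_injective hinj hm, ?_⟩
  intro G hG
  have hmg : (G.map (YL p q)).map (XL p q) = G := by
    rw [← Submodule.map_comp, XY p q, Submodule.map_id]
  exact ⟨G.map (YL p q), (main _).mpr (by rw [hmg]; exact hG), hmg⟩

end
end

section
/- Let 𝐇 = H ⊕ Ĥ ⊕ H with J as above. For every subspace η ∈ Sym(𝐇) there exists a subspace τ ⊂ 𝐇 such that τ^⊤ ∈ Sym(𝐇), dim τ = ν + ν̂ (the minimal possible dimension), and τ^⊤ ∩ η = {0}. -/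
noncomputable section

namespace Stmt6Aux

open Module Complex Finset

variable {p q : ℕ}

/-- the sesquilinear form. -/
def B (x y : bH p q) : ℂ := inner ℂ (JL p q x) y

lemma B_inner_sum (x y : bH p q) :
    B x y = (∑ i, -(starRingEnd ℂ (x (Sum.inr (Sum.inr i))) * y (Sum.inl i)))
      + ((∑ j, starRingEnd ℂ (Complex.I * x (Sum.inr (Sum.inl j))) * y (Sum.inr (Sum.inl j)))
      + ∑ i, starRingEnd ℂ (x (Sum.inl i)) * y (Sum.inr (Sum.inr i))) := by
  simp [B, JL, PiLp.inner_apply, RCLike.inner_apply', -RCLike.inner_apply, Fintype.sum_sum_type]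

lemma inner_sum' (x y : bH p q) :
    (inner ℂ x y : ℂ) = (∑ i, starRingEnd ℂ (x (Sum.inl i)) * y (Sum.inl i))
      + ((∑ j, starRingEnd ℂ (x (Sum.inr (Sum.inl j))) * y (Sum.inr (Sum.inl j)))
      + ∑ i, starRingEnd ℂ (x (Sum.inr (Sum.inr i))) * y (Sum.inr (Sum.inr i))) := by
  simp [PiLp.inner_apply, RCLike.inner_apply', -RCLike.inner_apply, Fintype.sum_sum_type]

/-- the negative-definite part. -/
def Em (p q : ℕ) : Submodule ℂ (bH p q) where
  carrier := {h | (∀ j, h (Sum.inr (Sum.inl j)) = 0) ∧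
      ∀ i, h (Sum.inr (Sum.inr i)) = Complex.I * h (Sum.inl i)}
  add_mem' := by
    rintro a b ⟨ha1, ha2⟩ ⟨hb1, hb2⟩
    refine ⟨fun j => ?_, fun i => ?_⟩ <;>
      simp only [PiLp.add_apply, ha1, hb1, ha2, hb2] <;> ring
  zero_mem' := by
    refine ⟨fun j => rfl, fun i => by simp⟩
  smul_mem' := by
    rintro c a ⟨ha1, ha2⟩
    refine ⟨fun j => ?_, fun i => ?_⟩ <;>
      simp only [PiLp.smul_apply, ha1, ha2, smul_eq_mul] <;> ring

lemma mem_Em {h : bH p q} :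
    h ∈ Em p q ↔ (∀ j, h (Sum.inr (Sum.inl j)) = 0) ∧
      ∀ i, h (Sum.inr (Sum.inr i)) = Complex.I * h (Sum.inl i) := Iff.rfl

lemma mem_Ep {h : bH p q} :
    h ∈ (Em p q)ᗮ ↔ ∀ i, h (Sum.inl i) = Complex.I * h (Sum.inr (Sum.inr i)) := by
  constructor
  · intro hh i
    have hmem : (EuclideanSpace.single (Sum.inl i) (1:ℂ) +
        EuclideanSpace.single (Sum.inr (Sum.inr i)) (Complex.I)) ∈ Em p q := by
      refine ⟨fun j => ?_, fun i' => ?_⟩ <;>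
        simp [EuclideanSpace.single_apply, PiLp.add_apply] <;>
        by_cases hii : i = i' <;> simp [hii]
    have h0 := hh _ hmem
    rw [inner_add_left, EuclideanSpace.inner_single_left, EuclideanSpace.inner_single_left] at h0
    simp only [map_one, one_mul, Complex.conj_I] at h0
    linear_combination h0
  · intro hh
    intro v hv
    rw [inner_sum']
    obtain ⟨hv1, hv2⟩ := hv
    simp only [hv1, hv2, hh, map_mul, Complex.conj_I, map_zero, zero_mul,
      Finset.sum_const_zero, add_zero, zero_add]
    rw [← Finset.sum_add_distrib]
    apply Finset.sum_eq_zero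
    intro i _
    ring


lemma B_EmEm {v v' : bH p q} (hv : v ∈ Em p q) (hv' : v' ∈ Em p q) :
    B v v' = Complex.I * inner ℂ v v' := by
  rw [B_inner_sum, inner_sum']
  simp only [hv.1, hv.2, hv'.1, hv'.2, map_mul, map_zero, Complex.conj_I, zero_mul, mul_zero,
    Finset.sum_const_zero, neg_zero, add_zero, zero_add, mul_add, Finset.mul_sum]
  congr 1
  · exact Finset.sum_congr rfl fun i _ => by ring
  · exact Finset.sum_congr rfl fun i _ => by
      linear_combination (Complex.I * (starRingEnd ℂ) (v (Sum.inl i)) * v' (Sum.inl i)) *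
        Complex.I_sq

lemma B_EpEp {u u' : bH p q} (hu : u ∈ (Em p q)ᗮ) (hu' : u' ∈ (Em p q)ᗮ) :
    B u u' = -Complex.I * inner ℂ u u' := by
  rw [mem_Ep] at hu hu'
  rw [B_inner_sum, inner_sum']
  simp only [hu, hu', map_mul, Complex.conj_I, mul_add, Finset.mul_sum]
  congr 1
  · exact Finset.sum_congr rfl fun i _ => by
      linear_combination (-(Complex.I * (starRingEnd ℂ) (u (Sum.inr (Sum.inr i))) *
        u' (Sum.inr (Sum.inr i)))) * Complex.I_sq
  congr 1
  · exact Finset.sum_congr rfl fun j _ => by ring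
  · exact Finset.sum_congr rfl fun i _ => by ring

lemma B_EpEm {u v : bH p q} (hu : u ∈ (Em p q)ᗮ) (hv : v ∈ Em p q) :
    B u v = 0 := by
  rw [mem_Ep] at hu
  rw [B_inner_sum]
  simp only [hu, hv.1, hv.2, map_mul, map_zero, Complex.conj_I, mul_zero, zero_mul,
    Finset.sum_const_zero, zero_add, add_zero, neg_zero]
  rw [← Finset.sum_add_distrib]
  apply Finset.sum_eq_zero
  intro i _
  linear_combination (-((starRingEnd ℂ) (u (Sum.inr (Sum.inr i))) * v (Sum.inl i))) *
    Complex.I_sq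

lemma B_EmEp {v u : bH p q} (hv : v ∈ Em p q) (hu : u ∈ (Em p q)ᗮ) :
    B v u = 0 := by
  rw [mem_Ep] at hu
  rw [B_inner_sum]
  simp only [hu, hv.1, hv.2, map_mul, map_zero, Complex.conj_I, mul_zero, zero_mul,
    Finset.sum_const_zero, zero_add, add_zero, neg_zero]
  rw [← Finset.sum_add_distrib]
  apply Finset.sum_eq_zero
  intro i _
  linear_combination ((starRingEnd ℂ) (v (Sum.inl i)) * u (Sum.inr (Sum.inr i))) *
    Complex.I_sq


section proj
variable (p q : ℕ)

def PmL : bH p q →ₗ[ℂ] bH p q :=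
  (Em p q).subtype ∘ₗ ((Em p q).orthogonalProjectionOnto).toLinearMap

def PpL : bH p q →ₗ[ℂ] bH p q :=
  (Em p q)ᗮ.subtype ∘ₗ ((Em p q)ᗮ.orthogonalProjectionOnto).toLinearMap

variable {p q}

lemma PmL_mem (x : bH p q) : PmL p q x ∈ Em p q := ((Em p q).orthogonalProjectionOnto x).2

lemma PpL_mem (x : bH p q) : PpL p q x ∈ (Em p q)ᗮ := ((Em p q)ᗮ.orthogonalProjectionOnto x).2

lemma decomp (x : bH p q) : PpL p q x + PmL p q x = x := by
  have h := Submodule.starProjection_add_starProjection_orthogonal (K := Em p q) x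
  rw [add_comm] at h
  exact h

lemma PmL_of_mem {v : bH p q} (hv : v ∈ Em p q) : PmL p q v = v := by
  exact (Submodule.starProjection_eq_self_iff (K := Em p q)).2 hv

lemma PpL_of_mem {u : bH p q} (hu : u ∈ (Em p q)ᗮ) : PpL p q u = u :=
  (Submodule.starProjection_eq_self_iff (K := (Em p q)ᗮ)).2 hu

lemma PmL_of_mem_orth {u : bH p q} (hu : u ∈ (Em p q)ᗮ) : PmL p q u = 0 := by
  have : (Em p q).orthogonalProjectionOnto u = 0 :=
    Submodule.orthogonalProjectionOnto_apply_of_mem_orthogonal hu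
  simp [PmL, this]

lemma PpL_of_mem_Em {v : bH p q} (hv : v ∈ Em p q) : PpL p q v = 0 := by
  have hv' : v ∈ (Em p q)ᗮᗮ := by rw [Submodule.orthogonal_orthogonal]; exact hv
  have : (Em p q)ᗮ.orthogonalProjectionOnto v = 0 :=
    Submodule.orthogonalProjectionOnto_apply_of_mem_orthogonal hv'
  simp [PpL, this]

lemma B_add_left (x x' y : bH p q) : B (x + x') y = B x y + B x' y := by
  simp [B, map_add, inner_add_left]

lemma B_add_right (x y y' : bH p q) : B x (y + y') = B x y + B x y' := by
  simp [B, inner_add_right]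

lemma Bsplit (x y : bH p q) :
    B x y = -Complex.I * inner ℂ (PpL p q x) (PpL p q y)
      + Complex.I * inner ℂ (PmL p q x) (PmL p q y) := by
  conv_lhs => rw [← decomp x, ← decomp y]
  rw [B_add_left, B_add_right, B_add_right,
    B_EpEp (PpL_mem x) (PpL_mem y), B_EpEm (PpL_mem x) (PmL_mem y),
    B_EmEp (PmL_mem x) (PpL_mem y), B_EmEm (PmL_mem x) (PmL_mem y)]
  ring

variable (p q)

def iotam : EuclideanSpace ℂ (Fin p) →ₗ[ℂ] bH p q where
  toFun b := WithLp.toLp 2 (Sum.elim (fun i => b i)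
    (Sum.elim (fun _ => 0) (fun i => Complex.I * b i)) : (Fin p ⊕ Fin q ⊕ Fin p) → ℂ)
  map_add' x y := by
    ext i
    rcases i with i | j | i <;>
      simp only [Sum.elim_inl, Sum.elim_inr, PiLp.add_apply] <;> ring
  map_smul' c x := by
    ext i
    rcases i with i | j | i <;>
      simp only [Sum.elim_inl, Sum.elim_inr, PiLp.smul_apply, smul_eq_mul,
        RingHom.id_apply] <;> ring

lemma iotam_range : LinearMap.range (iotam p q) = Em p q := by
  apply le_antisymm
  · rintro _ ⟨b, rfl⟩
    exact ⟨fun j => rfl, fun i => rfl⟩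
  · rintro h ⟨h1, h2⟩
    refine ⟨WithLp.toLp 2 (fun i => h (Sum.inl i)), ?_⟩
    ext x
    rcases x with i | j | i
    · rfl
    · exact (h1 j).symm
    · exact (h2 i).symm

lemma iotam_inj : Function.Injective (iotam p q) := by
  intro a b hab
  ext i
  exact congrFun (congrArg WithLp.ofLp hab) (Sum.inl i)

lemma finrank_Em : Module.finrank ℂ (Em p q) = p := by
  rw [← iotam_range]
  rw [LinearMap.finrank_range_of_inj (iotam_inj p q)]
  simp

lemma finrank_bH : Module.finrank ℂ (bH p q) = p + q + p := by
  simp [finrank_euclideanSpace]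
  ring

lemma finrank_Ep : Module.finrank ℂ ((Em p q)ᗮ) = p + q := by
  have h := Submodule.finrank_add_finrank_orthogonal (K := Em p q)
  rw [finrank_Em, finrank_bH] at h
  omega

lemma JL_JL (y : bH p q) : JL p q (JL p q y) = -y := by
  ext x
  rcases x with i | j | i <;>
    simp [JL, PiLp.neg_apply] <;> ring_nf <;>
    simp [Complex.I_sq] <;> ring

lemma JL_surj : Function.Surjective (JL p q) := by
  intro y
  exact ⟨-(JL p q y), by rw [map_neg, JL_JL]; simp⟩

lemma JL_inj : Function.Injective (JL p q) := by
  intro a b hab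
  have := congrArg (JL p q) hab
  rw [JL_JL, JL_JL] at this
  simpa using this

end proj

lemma nonempty_isometry {E F : Type*} [NormedAddCommGroup E] [InnerProductSpace ℂ E]
    [NormedAddCommGroup F] [InnerProductSpace ℂ F] [FiniteDimensional ℂ E]
    [FiniteDimensional ℂ F] (h : Module.finrank ℂ E ≤ Module.finrank ℂ F) :
    Nonempty (E →ₗᵢ[ℂ] F) := by
  let bE := stdOrthonormalBasis ℂ E
  let bF := stdOrthonormalBasis ℂ F
  let f : E →ₗ[ℂ] F := bE.toBasis.constr ℂ (fun i => bF (Fin.castLE h i))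
  have hv : Orthonormal ℂ (⇑bE.toBasis) := by
    rw [OrthonormalBasis.coe_toBasis]; exact bE.orthonormal
  have hfv : ⇑f ∘ ⇑bE.toBasis = fun i => bF (Fin.castLE h i) := by
    funext i
    exact bE.toBasis.constr_basis ℂ (fun i => bF (Fin.castLE h i)) i
  have hf : Orthonormal ℂ (⇑f ∘ ⇑bE.toBasis) := by
    rw [hfv]
    exact bF.orthonormal.comp _ (Fin.castLE_injective h)
  exact ⟨f.isometryOfOrthonormal hv hf⟩

lemma exists_embed {E : Type*} [NormedAddCommGroup E] [InnerProductSpace ℂ E]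
    [FiniteDimensional ℂ E] (A B : Submodule ℂ E)
    (h : Module.finrank ℂ A ≤ Module.finrank ℂ B) :
    ∃ f : A →ₗ[ℂ] E, (∀ v, f v ∈ B) ∧
      ∀ v v', (inner ℂ (f v) (f v') : ℂ) = inner ℂ (v : E) (v' : E) := by
  obtain ⟨T⟩ := nonempty_isometry h
  refine ⟨B.subtype ∘ₗ T.toLinearMap, fun v => (T v).2, fun v v' => ?_⟩
  have h1 := T.inner_map_map v v'
  rwa [Submodule.coe_inner, Submodule.coe_inner] at h1

end Stmt6Aux

open Stmt6Aux Module

set_option maxHeartbeats 2000000 in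
theorem stmt6 (p q : ℕ) (η : Submodule ℂ (bH p q))
    (hSym : ∀ h ∈ η, ∀ k ∈ η, (inner ℂ ((JL p q) h) k : ℂ) = 0) :
    ∃ τ : Submodule ℂ (bH p q),
      (∀ h ∈ (τ.map (JL p q))ᗮ, ∀ k ∈ (τ.map (JL p q))ᗮ, (inner ℂ ((JL p q) h) k : ℂ) = 0) ∧
      Module.finrank ℂ τ = p + q ∧
      (τ.map (JL p q))ᗮ ⊓ η = ⊥ := by
  classical
  have hB : ∀ x ∈ η, ∀ y ∈ η, B x y = 0 := hSym
  set Np : Submodule ℂ (bH p q) := η.map (PpL p q) with hNp_def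
  set Nm : Submodule ℂ (bH p q) := η.map (PmL p q) with hNm_def
  set Am : Submodule ℂ (bH p q) := Nmᗮ ⊓ Em p q with hAm_def
  set Ap : Submodule ℂ (bH p q) := Npᗮ ⊓ (Em p q)ᗮ with hAp_def
  set d : ℕ := finrank ℂ η with hd_def
  -- injectivity of the two projections on η
  have hinjm : ∀ x ∈ η, PmL p q x = 0 → x = 0 := by
    intro x hx h0
    have hx0 := hB x hx x hx
    rw [Bsplit, h0] at hx0
    simp only [inner_zero_left, mul_zero, add_zero, neg_mul, neg_eq_zero, mul_eq_zero,
      Complex.I_ne_zero, false_or] at hx0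
    have hxPp : PpL p q x = x := by
      have := decomp (p := p) (q := q) x
      rw [h0, add_zero] at this
      exact this
    rw [hxPp, inner_self_eq_zero] at hx0
    exact hx0
  have hinjp : ∀ x ∈ η, PpL p q x = 0 → x = 0 := by
    intro x hx h0
    have hx0 := hB x hx x hx
    rw [Bsplit, h0] at hx0
    simp only [inner_zero_left, mul_zero, zero_add, mul_eq_zero,
      Complex.I_ne_zero, false_or] at hx0
    have hxPm : PmL p q x = x := by
      have := decomp (p := p) (q := q) x
      rw [h0, zero_add] at this
      exact this
    rw [hxPm, inner_self_eq_zero] at hx0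
    exact hx0
  -- ranks of the projections
  have hNm_rank : finrank ℂ Nm = d := by
    have hr : LinearMap.range ((PmL p q) ∘ₗ η.subtype) = Nm := by
      rw [LinearMap.range_comp, Submodule.range_subtype]
    have hinj : Function.Injective ((PmL p q) ∘ₗ η.subtype) := by
      rw [← LinearMap.ker_eq_bot, eq_bot_iff]
      rintro ⟨x, hx⟩ hker
      have h0 : PmL p q x = 0 := hker
      have hx0 : x = 0 := hinjm x hx h0
      simp [Submodule.mem_bot, Subtype.ext_iff, hx0]
    rw [← hr, LinearMap.finrank_range_of_inj hinj]
  have hNp_rank : finrank ℂ Np = d := by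
    have hr : LinearMap.range ((PpL p q) ∘ₗ η.subtype) = Np := by
      rw [LinearMap.range_comp, Submodule.range_subtype]
    have hinj : Function.Injective ((PpL p q) ∘ₗ η.subtype) := by
      rw [← LinearMap.ker_eq_bot, eq_bot_iff]
      rintro ⟨x, hx⟩ hker
      have h0 : PpL p q x = 0 := hker
      have hx0 : x = 0 := hinjp x hx h0
      simp [Submodule.mem_bot, Subtype.ext_iff, hx0]
    rw [← hr, LinearMap.finrank_range_of_inj hinj]
  have hNm_le : Nm ≤ Em p q := by
    rintro _ ⟨x, hx, rfl⟩
    exact PmL_mem x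
  have hNp_le : Np ≤ (Em p q)ᗮ := by
    rintro _ ⟨x, hx, rfl⟩
    exact PpL_mem x
  have hd_le : d ≤ p := by
    have := Submodule.finrank_mono hNm_le
    rw [hNm_rank, finrank_Em] at this
    exact this
  -- ranks of the A spaces
  have hAm_rank : finrank ℂ Am = p - d := by
    have hsup : Nm ⊔ Am = Em p q := Submodule.sup_orthogonal_inf_of_hasOrthogonalProjection hNm_le
    have hinf : Nm ⊓ Am = ⊥ := by
      rw [eq_bot_iff]
      intro y hy
      exact (Submodule.orthogonal_disjoint Nm).le_bot ⟨hy.1, hy.2.1⟩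
    have h := Submodule.finrank_sup_add_finrank_inf_eq Nm Am
    rw [hsup, hinf, finrank_Em, finrank_bot, hNm_rank] at h
    omega
  have hAp_rank : finrank ℂ Ap = p + q - d := by
    have hsup : Np ⊔ Ap = (Em p q)ᗮ := Submodule.sup_orthogonal_inf_of_hasOrthogonalProjection hNp_le
    have hinf : Np ⊓ Ap = ⊥ := by
      rw [eq_bot_iff]
      intro y hy
      exact (Submodule.orthogonal_disjoint Np).le_bot ⟨hy.1, hy.2.1⟩
    have h := Submodule.finrank_sup_add_finrank_inf_eq Np Ap
    rw [hsup, hinf, finrank_Ep, finrank_bot, hNp_rank] at h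
    omega
  -- the isometric embedding
  obtain ⟨t, htB, htiso⟩ : ∃ f : Am →ₗ[ℂ] bH p q, (∀ v, f v ∈ Ap) ∧
      ∀ v v', (inner ℂ (f v) (f v') : ℂ) = inner ℂ (v : bH p q) (v' : bH p q) :=
    exists_embed Am Ap (by rw [hAm_rank, hAp_rank]; omega)
  -- the two building maps
  set σL : bH p q →ₗ[ℂ] bH p q := PmL p q - PpL p q with hσL_def
  set ℓ : Am →ₗ[ℂ] bH p q := t + Am.subtype with hℓ_def
  have hσm : ∀ x, PmL p q (σL x) = PmL p q x := by
    intro x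
    simp only [hσL_def, LinearMap.sub_apply, map_sub]
    rw [PmL_of_mem (PmL_mem x), PmL_of_mem_orth (PpL_mem x), sub_zero]
  have hσp : ∀ x, PpL p q (σL x) = -(PpL p q x) := by
    intro x
    simp only [hσL_def, LinearMap.sub_apply, map_sub]
    rw [PpL_of_mem (PpL_mem x), PpL_of_mem_Em (PmL_mem x), zero_sub]
  have hℓm : ∀ v : Am, PmL p q (ℓ v) = (v : bH p q) := by
    intro v
    simp only [hℓ_def, LinearMap.add_apply, Submodule.coe_subtype, map_add]
    rw [PmL_of_mem_orth (htB v).2, PmL_of_mem (v.2.2), zero_add]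
  have hℓp : ∀ v : Am, PpL p q (ℓ v) = t v := by
    intro v
    simp only [hℓ_def, LinearMap.add_apply, Submodule.coe_subtype, map_add]
    rw [PpL_of_mem (htB v).2, PpL_of_mem_Em (v.2.2), add_zero]
  -- orthogonality facts
  have zPmAm : ∀ w : bH p q, w ∈ Nmᗮ → ∀ x ∈ η, (inner ℂ (PmL p q x) w : ℂ) = 0 := by
    intro w hw x hx
    exact (Submodule.mem_orthogonal Nm _).mp hw _ ⟨x, hx, rfl⟩
  have zAmPm : ∀ w : bH p q, w ∈ Nmᗮ → ∀ x ∈ η, (inner ℂ w (PmL p q x) : ℂ) = 0 := by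
    intro w hw x hx
    rw [inner_eq_zero_symm]
    exact zPmAm w hw x hx
  have zPpAp : ∀ w : bH p q, w ∈ Npᗮ → ∀ x ∈ η, (inner ℂ (PpL p q x) w : ℂ) = 0 := by
    intro w hw x hx
    exact (Submodule.mem_orthogonal Np _).mp hw _ ⟨x, hx, rfl⟩
  have zApPp : ∀ w : bH p q, w ∈ Npᗮ → ∀ x ∈ η, (inner ℂ w (PpL p q x) : ℂ) = 0 := by
    intro w hw x hx
    rw [inner_eq_zero_symm]
    exact zPpAp w hw x hx
  -- the subspace W
  set S : Submodule ℂ (bH p q) := η.map σL with hS_def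
  set G : Submodule ℂ (bH p q) := LinearMap.range ℓ with hG_def
  set W : Submodule ℂ (bH p q) := S ⊔ G with hW_def
  set τ : Submodule ℂ (bH p q) := Wᗮ.comap (JL p q) with hτ_def
  have hτmap : τ.map (JL p q) = Wᗮ :=
    Submodule.map_comap_eq_of_surjective (JL_surj p q) _
  have hWperp : (τ.map (JL p q))ᗮ = W := by
    rw [hτmap, Submodule.orthogonal_orthogonal]
  -- membership decomposition in W
  have hmemW : ∀ y ∈ W, ∃ x ∈ η, ∃ v : Am, y = σL x + ℓ v := by
    intro y hy
    rw [hW_def, Submodule.mem_sup] at hy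
    obtain ⟨s, hs, g, hg, rfl⟩ := hy
    obtain ⟨x, hx, rfl⟩ := hs
    obtain ⟨v, rfl⟩ := hg
    exact ⟨x, hx, v, rfl⟩
  -- isotropy of W
  have hiso : ∀ h ∈ W, ∀ k ∈ W, B h k = 0 := by
    intro h hh k hk
    obtain ⟨x, hx, v, rfl⟩ := hmemW h hh
    obtain ⟨x', hx', v', rfl⟩ := hmemW k hk
    rw [Bsplit, map_add, map_add, map_add, map_add, hσm x, hσm x', hσp x, hσp x',
      hℓm v, hℓm v', hℓp v, hℓp v']
    simp only [inner_add_left, inner_add_right, inner_neg_left, inner_neg_right]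
    rw [zPmAm (v' : bH p q) v'.2.1 x hx, zAmPm (v : bH p q) v.2.1 x' hx',
      zPpAp (t v') (htB v').1 x hx, zApPp (t v) (htB v).1 x' hx', htiso v v']
    have hxx' := hB x hx x' hx'
    rw [Bsplit] at hxx'
    linear_combination hxx'
  -- W ∩ η = ⊥
  have hWeta : W ⊓ η = ⊥ := by
    rw [eq_bot_iff]
    rintro y ⟨hyW, hyη⟩
    obtain ⟨x, hx, v, hy⟩ := hmemW y hyW
    have hPmy : PmL p q y = PmL p q x + (v : bH p q) := by
      rw [hy, map_add, hσm x, hℓm v]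
    have hvNm : (v : bH p q) ∈ Nm := by
      have h1 : (v : bH p q) = PmL p q y - PmL p q x := by rw [hPmy]; abel
      rw [h1]
      exact sub_mem ⟨y, hyη, rfl⟩ ⟨x, hx, rfl⟩
    have hv0 : v = 0 := by
      have : (v : bH p q) ∈ Nm ⊓ Nmᗮ := ⟨hvNm, v.2.1⟩
      have := (Submodule.orthogonal_disjoint Nm).le_bot this
      exact Subtype.ext this
    have hyσ : y = σL x := by rw [hy, hv0, map_zero, add_zero]
    have hxy : x + y = 0 := by
      apply hinjp _ (add_mem hx hyη)
      rw [map_add, hyσ, hσp x]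
      abel
    have hxy' : x - y = 0 := by
      apply hinjm _ (sub_mem hx hyη)
      rw [map_sub, hyσ, hσm x]
      abel
    have h2y : y + y = 0 := by
      have : (x + y) - (x - y) = y + y := by abel
      rw [hxy, hxy'] at this
      simpa using this.symm
    have : (2 : ℂ) • y = 0 := by rw [two_smul]; exact h2y
    have hy0 : y = 0 := by
      rcases smul_eq_zero.mp this with h | h
      · exact absurd h two_ne_zero
      · exact h
    simp [hy0]
  -- rank of W
  have hσσ : ∀ x, σL (σL x) = x := by
    intro x
    rw [show σL (σL x) = PmL p q (σL x) - PpL p q (σL x) from rfl, hσm, hσp, sub_neg_eq_add,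
      add_comm]
    exact decomp x
  have hσinj : Function.Injective σL := by
    intro a b hab
    have := congrArg σL hab
    rwa [hσσ, hσσ] at this
  have hS_rank : finrank ℂ S = d := ((Submodule.equivMapOfInjective σL hσinj η).finrank_eq).symm
  have hℓinj : Function.Injective ℓ := by
    rw [← LinearMap.ker_eq_bot, eq_bot_iff]
    intro v hv
    have hv' : ℓ v = 0 := hv
    have := hℓm v
    rw [hv', map_zero] at this
    simpa using Subtype.ext this.symm
  have hG_rank : finrank ℂ G = p - d := by
    rw [hG_def, LinearMap.finrank_range_of_inj hℓinj, hAm_rank]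
  have hSG : S ⊓ G = ⊥ := by
    rw [eq_bot_iff]
    rintro y ⟨hyS, hyG⟩
    obtain ⟨x, hx, rfl⟩ := hyS
    obtain ⟨v, hv⟩ := hyG
    have h1 : (v : bH p q) = PmL p q x := by
      have := hℓm v
      rw [hv, hσm x] at this
      exact this.symm
    have hvNm : (v : bH p q) ∈ Nm := by rw [h1]; exact ⟨x, hx, rfl⟩
    have hv0 : (v : bH p q) = 0 := (Submodule.orthogonal_disjoint Nm).le_bot ⟨hvNm, v.2.1⟩
    have hPm0 : PmL p q x = 0 := by rw [← h1, hv0]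
    have hx0 : x = 0 := hinjm x hx hPm0
    simp [hx0]
  have hW_rank : finrank ℂ W = p := by
    have h := Submodule.finrank_sup_add_finrank_inf_eq S G
    rw [hSG, finrank_bot, hS_rank, hG_rank, ← hW_def] at h
    omega
  -- rank of τ
  have hτ_rank : finrank ℂ τ = p + q := by
    have horth := Submodule.finrank_add_finrank_orthogonal (K := W)
    rw [hW_rank, finrank_bH] at horth
    set e : bH p q ≃ₗ[ℂ] bH p q := LinearEquiv.ofBijective (JL p q) ⟨JL_inj p q, JL_surj p q⟩
      with he_def
    have hre : finrank ℂ τ = finrank ℂ Wᗮ := by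
      rw [hτ_def, show Wᗮ.comap (JL p q) = Wᗮ.comap (e : bH p q →ₗ[ℂ] bH p q) from rfl,
        Submodule.comap_equiv_eq_map_symm]
      exact LinearEquiv.finrank_map_eq e.symm Wᗮ
    rw [hre]
    omega
  refine ⟨τ, ?_, hτ_rank, ?_⟩
  · rw [hWperp]
    exact hiso
  · rw [hWperp]
    exact hWeta
end
end
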